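/- Weak transference: let (r,c) be a δ-tame m×n margin with MLE (α,β), let X be distributed as the base product measure μ^{⊗m×n} conditioned on the event 𝒯_ρ(r,c) (which has positive finite base measure), and let Y have independent entries Y_{ij} ∼ μ_{α(i)+β(j)}. Then there is a constant C₁ = C₁(μ,δ) such that for every Borel set ℰ ⊆ ℝ^{m×n}: P(X ∈ ℰ) ≤ exp(C₁ρ)·P(Y ∈ 𝒯_ρ(r,c))^{-1}·P(Y ∈ ℰ). -/

import Mathlib

open MeasureTheory Real Set ENNReal

/-- Lintegral of a product of functions of separate coordinates over `Fin n`. -/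
theorem lintegral_pi_prod_fin {n : ℕ} {E : Fin n → Type*} [∀ i, MeasurableSpace (E i)]
    (μ : ∀ i, Measure (E i)) [∀ i, SigmaFinite (μ i)]
    (f : ∀ i, E i → ℝ≥0∞) (hf : ∀ i, Measurable (f i)) :
    ∫⁻ x : (i : Fin n) → E i, ∏ i, f i (x i) ∂Measure.pi μ = ∏ i, ∫⁻ x, f i x ∂μ i := by
  induction n with
  | zero => simp [Measure.pi_of_empty]
  | succ n n_ih =>
      calc
        _ = ∫⁻ x : E 0 × ((i : Fin n) → E (Fin.succ i)),
            f 0 x.1 * ∏ i : Fin n, f (Fin.succ i) (x.2 i)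
            ∂(μ 0).prod (Measure.pi fun i => μ (Fin.succ i)) := by
          rw [← ((measurePreserving_piFinSuccAbove (fun i => μ i) 0).symm).lintegral_comp_emb
            (MeasurableEquiv.measurableEmbedding _)]
          congr 1
          ext x
          simp_rw [MeasurableEquiv.piFinSuccAbove_symm_apply, Fin.insertNthEquiv,
            Fin.prod_univ_succ, Fin.insertNth_zero]
          simp [Fin.zero_succAbove]
          rfl
        _ = (∫⁻ x, f 0 x ∂μ 0) * ∏ i : Fin n, ∫⁻ x, f (Fin.succ i) x ∂μ (Fin.succ i) := by
          have hg : AEMeasurable (fun y : (i : Fin n) → E (Fin.succ i) => ∏ i, f (Fin.succ i) (y i))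
              (Measure.pi fun i => μ (Fin.succ i)) :=
            (Finset.measurable_prod _ fun i _ =>
              (hf (Fin.succ i)).comp (measurable_pi_apply i)).aemeasurable
          rw [lintegral_prod_mul (f := f 0)
            (g := fun y : (i : Fin n) → E (Fin.succ i) => ∏ i, f (Fin.succ i) (y i))
            (hf 0).aemeasurable hg,
            n_ih (fun i => μ (Fin.succ i)) (fun i => f (Fin.succ i)) (fun i => hf _)]
        _ = ∏ i, ∫⁻ x, f i x ∂μ i := by rw [Fin.prod_univ_succ]

theorem lintegral_pi_prod {ι : Type*} [Fintype ι] {E : ι → Type*} [∀ i, MeasurableSpace (E i)]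
    (μ : ∀ i, Measure (E i)) [∀ i, SigmaFinite (μ i)]
    (f : ∀ i, E i → ℝ≥0∞) (hf : ∀ i, Measurable (f i)) :
    ∫⁻ x : (i : ι) → E i, ∏ i, f i (x i) ∂Measure.pi μ = ∏ i, ∫⁻ x, f i x ∂μ i := by
  let e := (Fintype.equivFin ι).symm
  rw [← (MeasureTheory.measurePreserving_piCongrLeft (fun i => μ i) e).lintegral_comp_emb
    (MeasurableEquiv.measurableEmbedding _)]
  have : ∀ y : (i : Fin (Fintype.card ι)) → E (e i),
      (∏ i, f i ((MeasurableEquiv.piCongrLeft E e) y i)) = ∏ i, f (e i) (y i) := by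
    intro y
    rw [← e.prod_comp]
    refine Finset.prod_congr rfl fun i _ => ?_
    rw [MeasurableEquiv.coe_piCongrLeft, Equiv.piCongrLeft_apply_apply]
  calc ∫⁻ y, (∏ i, f i ((MeasurableEquiv.piCongrLeft E e) y i))
        ∂(Measure.pi fun i => μ (e i))
      = ∫⁻ y, ∏ i, f (e i) (y i) ∂(Measure.pi fun i => μ (e i)) := by simp_rw [this]
    _ = ∏ i, ∫⁻ x, f (e i) x ∂μ (e i) :=
        lintegral_pi_prod_fin (fun i => μ (e i)) (fun i => f (e i)) (fun i => hf (e i))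
    _ = ∏ i, ∫⁻ x, f i x ∂μ i := e.prod_comp fun i => ∫⁻ x, f i x ∂μ i

theorem pi_withDensity {ι : Type*} [Fintype ι] {E : ι → Type*} [∀ i, MeasurableSpace (E i)]
    (μ : ∀ i, Measure (E i)) [∀ i, SigmaFinite (μ i)]
    (f : ∀ i, E i → ℝ≥0∞) (hf : ∀ i, Measurable (f i))
    [∀ i, SigmaFinite ((μ i).withDensity (f i))] :
    Measure.pi (fun i => (μ i).withDensity (f i))
      = (Measure.pi μ).withDensity (fun x => ∏ i, f i (x i)) := by
  refine Measure.pi_eq fun s hs => ?_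
  rw [withDensity_apply _ (MeasurableSet.univ_pi hs)]
  have : ∀ x : (i : ι) → E i, (Set.pi Set.univ s).indicator (fun x => ∏ i, f i (x i)) x
      = ∏ i, (s i).indicator (f i) (x i) := by
    intro x
    by_cases hx : x ∈ Set.pi Set.univ s
    · rw [Set.indicator_of_mem hx]
      exact Finset.prod_congr rfl fun i _ =>
        (Set.indicator_of_mem (hx i (Set.mem_univ i)) _).symm
    · rw [Set.indicator_of_notMem hx]
      rw [Set.mem_univ_pi] at hx
      push_neg at hx
      obtain ⟨i, hi⟩ := hx
      exact (Finset.prod_eq_zero (Finset.mem_univ i)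
        (by rw [Set.indicator_of_notMem hi])).symm
  rw [← lintegral_indicator (MeasurableSet.univ_pi hs)]
  simp_rw [this]
  rw [lintegral_pi_prod μ _ (fun i => (hf i).indicator (hs i))]
  exact Finset.prod_congr rfl fun i _ =>
    by rw [lintegral_indicator (hs i), withDensity_apply _ (hs i)]

theorem convexOn_logMGF (μ : Measure ℝ) (Θ : Set ℝ)
    (hΘ : Θ = {θ : ℝ | ∫⁻ x, ENNReal.ofReal (Real.exp (θ * x)) ∂μ < ⊤})
    (ψ : ℝ → ℝ) (hψ : ∀ θ, ψ θ = Real.log (∫ x, Real.exp (θ * x) ∂μ)) :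
    ConvexOn ℝ Θ ψ := by
  classical
  rcases eq_or_ne μ 0 with rfl | hμ
  · have hψ0 : ∀ θ, ψ θ = 0 := by intro θ; rw [hψ θ]; simp
    have hΘ0 : Θ = Set.univ := by
      rw [hΘ]; ext θ; simp
    rw [hΘ0]
    have : ψ = fun _ => (0:ℝ) := funext hψ0
    rw [this]
    exact convexOn_const 0 convex_univ
  -- notation
  set F : ℝ → ℝ≥0∞ := fun θ => ∫⁻ x, ENNReal.ofReal (Real.exp (θ * x)) ∂μ with hF
  have hmeas : ∀ θ : ℝ, Measurable fun x : ℝ => ENNReal.ofReal (Real.exp (θ * x)) := by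
    intro θ
    exact (ENNReal.measurable_ofReal).comp ((Real.continuous_exp.measurable).comp
      (measurable_const.mul measurable_id))
  have hFpos : ∀ θ, F θ ≠ 0 := by
    intro θ h0
    rw [hF] at h0
    rw [lintegral_eq_zero_iff (hmeas θ)] at h0
    have : μ {x : ℝ | ¬ (ENNReal.ofReal (Real.exp (θ * x)) = 0)} = 0 := by
      simpa [Filter.EventuallyEq, ae_iff] using h0
    have huniv : {x : ℝ | ¬ (ENNReal.ofReal (Real.exp (θ * x)) = 0)} = Set.univ := by
      ext x; simp [ENNReal.ofReal_eq_zero, not_le, Real.exp_pos]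
    rw [huniv] at this
    exact hμ (Measure.measure_univ_eq_zero.mp this)
  -- Hölder
  have key : ∀ (θ₁ θ₂ a b : ℝ), 0 < a → 0 < b → a + b = 1 →
      F (a * θ₁ + b * θ₂) ≤ (F θ₁) ^ a * (F θ₂) ^ b := by
    intro θ₁ θ₂ a b ha hb hab
    have ha1 : a < 1 := by linarith
    have hpq : Real.HolderConjugate (1/a) (1/b) := Real.holderConjugate_one_div ha hb hab
    have hptwise : ∀ x : ℝ, ENNReal.ofReal (Real.exp ((a * θ₁ + b * θ₂) * x))
        = (ENNReal.ofReal (Real.exp (θ₁ * x))) ^ a * (ENNReal.ofReal (Real.exp (θ₂ * x))) ^ b := by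
      intro x
      rw [ENNReal.ofReal_rpow_of_pos (Real.exp_pos _), ENNReal.ofReal_rpow_of_pos (Real.exp_pos _),
        ← Real.exp_mul, ← Real.exp_mul, ← ENNReal.ofReal_mul (Real.exp_nonneg _), ← Real.exp_add]
      ring_nf
    have h1 : F (a * θ₁ + b * θ₂)
        = ∫⁻ x, (ENNReal.ofReal (Real.exp (θ₁ * x))) ^ a * (ENNReal.ofReal (Real.exp (θ₂ * x))) ^ b ∂μ := by
      rw [hF]; exact lintegral_congr hptwise
    have h2 := ENNReal.lintegral_mul_le_Lp_mul_Lq μ hpq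
      (((hmeas θ₁).pow_const a).aemeasurable)
      (((hmeas θ₂).pow_const b).aemeasurable)
    rw [h1]
    refine le_trans h2 ?_
    have hrw : ∀ (θ c : ℝ), 0 < c → (fun x : ℝ => ((ENNReal.ofReal (Real.exp (θ * x))) ^ c) ^ (1/c))
        = fun x : ℝ => ENNReal.ofReal (Real.exp (θ * x)) := by
      intro θ c hc
      funext x
      rw [← ENNReal.rpow_mul, mul_one_div_cancel hc.ne', ENNReal.rpow_one]
    rw [one_div_one_div, one_div_one_div]
    simp_rw [← ENNReal.rpow_mul]
    rw [mul_one_div_cancel ha.ne', mul_one_div_cancel hb.ne']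
    simp_rw [ENNReal.rpow_one]
    exact le_refl _
  -- Θ is convex
  have hΘconv : Convex ℝ Θ := by
    intro θ₁ h1 θ₂ h2 a b ha hb hab
    rcases eq_or_lt_of_le ha with rfl | ha'
    · have hb1 : b = 1 := by linarith
      subst hb1; simpa using h2
    rcases eq_or_lt_of_le hb with rfl | hb'
    · have ha1' : a = 1 := by linarith
      subst ha1'; simpa using h1
    rw [hΘ] at h1 h2 ⊢
    simp only [Set.mem_setOf_eq] at h1 h2 ⊢
    calc (∫⁻ x, ENNReal.ofReal (Real.exp ((a • θ₁ + b • θ₂) * x)) ∂μ)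
        ≤ (F θ₁) ^ a * (F θ₂) ^ b := key θ₁ θ₂ a b ha' hb' hab
      _ < ⊤ := ENNReal.mul_lt_top
          (ENNReal.rpow_lt_top_of_nonneg ha h1.ne)
          (ENNReal.rpow_lt_top_of_nonneg hb h2.ne)
  refine ⟨hΘconv, ?_⟩
  intro θ₁ h1 θ₂ h2 a b ha hb hab
  rcases eq_or_lt_of_le ha with rfl | ha'
  · have hb1 : b = 1 := by linarith
    subst hb1; simp
  rcases eq_or_lt_of_le hb with rfl | hb'
  · have ha1' : a = 1 := by linarith
    subst ha1'; simp
  have h1' : F θ₁ < ⊤ := by rw [hΘ] at h1; exact h1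
  have h2' : F θ₂ < ⊤ := by rw [hΘ] at h2; exact h2
  have hle := key θ₁ θ₂ a b ha' hb' hab
  have hPfin : (F θ₁) ^ a * (F θ₂) ^ b ≠ ⊤ :=
    (ENNReal.mul_lt_top (ENNReal.rpow_lt_top_of_nonneg ha h1'.ne)
      (ENNReal.rpow_lt_top_of_nonneg hb h2'.ne)).ne
  have hcfin : F (a * θ₁ + b * θ₂) ≠ ⊤ := (lt_of_le_of_lt hle (lt_top_iff_ne_top.mpr hPfin)).ne
  -- relate integral and lintegral
  have hint : ∀ θ : ℝ, ∫ x, Real.exp (θ * x) ∂μ = (F θ).toReal := by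
    intro θ
    have h := integral_eq_lintegral_of_nonneg_ae (μ := μ) (f := fun x => Real.exp (θ * x))
      (ae_of_all _ fun x => (Real.exp_nonneg _))
      ((measurable_id.const_mul θ).exp.aestronglyMeasurable)
    rw [h]
  have hψ' : ∀ θ, ψ θ = Real.log (F θ).toReal := fun θ => by rw [hψ, hint]
  have htR : (F (a * θ₁ + b * θ₂)).toReal ≤ ((F θ₁) ^ a * (F θ₂) ^ b).toReal :=
    ENNReal.toReal_mono hPfin hle
  have hposR : 0 < (F (a * θ₁ + b * θ₂)).toReal :=
    ENNReal.toReal_pos (hFpos _) hcfin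
  have hprod : ((F θ₁) ^ a * (F θ₂) ^ b).toReal
      = (F θ₁).toReal ^ a * (F θ₂).toReal ^ b := by
    rw [ENNReal.toReal_mul, ← ENNReal.toReal_rpow, ← ENNReal.toReal_rpow]
  have hp1 : 0 < (F θ₁).toReal := ENNReal.toReal_pos (hFpos _) h1'.ne
  have hp2 : 0 < (F θ₂).toReal := ENNReal.toReal_pos (hFpos _) h2'.ne
  have : ψ (a * θ₁ + b * θ₂) ≤ a * ψ θ₁ + b * ψ θ₂ := by
    rw [hψ', hψ', hψ']
    calc Real.log (F (a * θ₁ + b * θ₂)).toReal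
        ≤ Real.log (((F θ₁) ^ a * (F θ₂) ^ b).toReal) := Real.log_le_log hposR htR
      _ = a * Real.log (F θ₁).toReal + b * Real.log (F θ₂).toReal := by
          rw [hprod, Real.log_mul (Real.rpow_pos_of_pos hp1 a).ne'
            (Real.rpow_pos_of_pos hp2 b).ne', Real.log_rpow hp1, Real.log_rpow hp2]
  simpa [smul_eq_mul] using this

theorem transfer_endgame {X : Type*} [MeasurableSpace X] (pm : Measure X) (T E : Set X)
    (hT : MeasurableSet T) (hE : MeasurableSet E) (g : X → ℝ) (hg : Measurable g)
    (L c : ℝ) (hbound : ∀ x ∈ T, |g x - L| ≤ c) :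
    pm (E ∩ T) / pm T ≤ ENNReal.ofReal (Real.exp (2 * c))
      * (pm.withDensity (fun x => ENNReal.ofReal (Real.exp (g x))) T)⁻¹
      * pm.withDensity (fun x => ENNReal.ofReal (Real.exp (g x))) E := by
  set ν := pm.withDensity (fun x => ENNReal.ofReal (Real.exp (g x))) with hν
  have hmg : Measurable fun x => ENNReal.ofReal (Real.exp (g x)) :=
    ENNReal.measurable_ofReal.comp hg.exp
  -- upper bound for ν T
  have hνT : ν T ≤ ENNReal.ofReal (Real.exp (L + c)) * pm T := by
    rw [hν, withDensity_apply _ hT]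
    calc ∫⁻ x in T, ENNReal.ofReal (Real.exp (g x)) ∂pm
        ≤ ∫⁻ _ in T, ENNReal.ofReal (Real.exp (L + c)) ∂pm := by
          refine setLIntegral_mono' hT fun x hx => ?_
          exact ENNReal.ofReal_le_ofReal (Real.exp_le_exp.mpr (by
            have := hbound x hx; rw [abs_le] at this; linarith))
      _ = ENNReal.ofReal (Real.exp (L + c)) * pm T := by
          rw [setLIntegral_const]
  -- lower bound for ν E
  have hνE : ENNReal.ofReal (Real.exp (L - c)) * pm (E ∩ T) ≤ ν E := by
    have h1 : ENNReal.ofReal (Real.exp (L - c)) * pm (E ∩ T) ≤ ν (E ∩ T) := by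
      rw [hν, withDensity_apply _ (hE.inter hT)]
      calc ENNReal.ofReal (Real.exp (L - c)) * pm (E ∩ T)
          = ∫⁻ _ in E ∩ T, ENNReal.ofReal (Real.exp (L - c)) ∂pm := by
            rw [setLIntegral_const]
        _ ≤ ∫⁻ x in E ∩ T, ENNReal.ofReal (Real.exp (g x)) ∂pm := by
            refine setLIntegral_mono' (hE.inter hT) fun x hx => ?_
            exact ENNReal.ofReal_le_ofReal (Real.exp_le_exp.mpr (by
              have := hbound x hx.2; rw [abs_le] at this; linarith))
    exact h1.trans (measure_mono Set.inter_subset_left)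
  -- combine
  have e1 : (0:ℝ≥0∞) < ENNReal.ofReal (Real.exp (L + c)) := by positivity
  have hinv : (ENNReal.ofReal (Real.exp (L + c)) * pm T)⁻¹ ≤ (ν T)⁻¹ :=
    ENNReal.inv_le_inv.mpr hνT
  calc pm (E ∩ T) / pm T
      = ENNReal.ofReal (Real.exp (2 * c)) * (ENNReal.ofReal (Real.exp (L + c)) * pm T)⁻¹
        * (ENNReal.ofReal (Real.exp (L - c)) * pm (E ∩ T)) := by
        rw [ENNReal.mul_inv (Or.inl (by positivity)) (Or.inl ENNReal.ofReal_ne_top)]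
        rw [div_eq_mul_inv]
        rw [← ENNReal.ofReal_inv_of_pos (Real.exp_pos _), ← Real.exp_neg]
        calc pm (E ∩ T) * (pm T)⁻¹
            = (ENNReal.ofReal (Real.exp (2*c)) * ENNReal.ofReal (Real.exp (-(L+c)))
              * ENNReal.ofReal (Real.exp (L-c))) * (pm (E ∩ T) * (pm T)⁻¹) := by
              rw [← ENNReal.ofReal_mul (Real.exp_nonneg _), ← ENNReal.ofReal_mul (by positivity),
                ← Real.exp_add, ← Real.exp_add]
              have hz : 2*c + (-(L+c)) + (L - c) = 0 := by ring
              rw [hz, Real.exp_zero, ENNReal.ofReal_one, one_mul]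
          _ = _ := by ring
      _ ≤ ENNReal.ofReal (Real.exp (2 * c)) * (ν T)⁻¹ * ν E := by
        exact mul_le_mul' (mul_le_mul' (le_refl _) hinv) hνE

theorem exists_real_btwn_ne {x z : EReal} (h : x < z) :
    ∃ v : ℝ, x < (v : EReal) ∧ (v : EReal) < z ∧ v ≠ 0 := by
  obtain ⟨a, hxa, haz⟩ := EReal.exists_between_coe_real h
  obtain ⟨b, hab, hbz⟩ := EReal.exists_between_coe_real haz
  by_cases ha0 : a = 0
  · refine ⟨b, hxa.trans hab, hbz, ?_⟩
    have : a < b := EReal.coe_lt_coe_iff.mp hab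
    intro hb0; rw [ha0, hb0] at this; exact lt_irrefl _ this
  · exact ⟨a, hxa, haz, ha0⟩

theorem Adelta_lt {A : EReal} {δ Aδ : ℝ} (hδ : 0 < δ)
    (hAδ : (Aδ : EReal) = max (A + (δ : EReal)) ((-(1/δ) : ℝ) : EReal)) :
    A < (Aδ : EReal) := by
  induction A using EReal.rec with
  | bot => exact EReal.bot_lt_coe Aδ
  | coe a =>
      rw [hAδ]
      refine lt_max_of_lt_left ?_
      rw [← EReal.coe_add, EReal.coe_lt_coe_iff]
      linarith
  | top =>
      exfalso
      rw [EReal.top_add_coe, max_eq_left le_top] at hAδ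
      exact EReal.coe_ne_top Aδ hAδ

theorem lt_Bdelta {B : EReal} {δ Bδ : ℝ} (hδ : 0 < δ)
    (hBδ : (Bδ : EReal) = min (B - (δ : EReal)) (((1/δ) : ℝ) : EReal)) :
    (Bδ : EReal) < B := by
  induction B using EReal.rec with
  | bot =>
      exfalso
      rw [EReal.bot_sub, min_eq_left bot_le] at hBδ
      exact EReal.coe_ne_bot Bδ hBδ
  | coe b =>
      have h1 : (Bδ : EReal) ≤ (b : EReal) - (δ : EReal) := hBδ ▸ min_le_left _ _
      rw [← EReal.coe_sub, EReal.coe_le_coe_iff] at h1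
      rw [EReal.coe_lt_coe_iff]
      linarith
  | top => exact EReal.coe_lt_top Bδ

/-- Weak transference principle: for a δ-tame margin (r,c) with MLE (α,β), if X is the
base product measure conditioned on the approximate-margin event 𝒯_ρ(r,c) and Y is the
product of tilted measures μ_{α(i)+β(j)}, then for some constant C₁ = C₁(μ,δ) > 0 and
every Borel set ℰ, P(X ∈ ℰ) ≤ exp(C₁ρ)·P(Y ∈ 𝒯_ρ(r,c))⁻¹·P(Y ∈ ℰ). -/
theorem weak_transference (μ : Measure ℝ) [SigmaFinite μ] (δ : ℝ) (hδ : 0 < δ)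
    (Θ : Set ℝ)
    (hΘ : Θ = {θ : ℝ | ∫⁻ x, ENNReal.ofReal (Real.exp (θ * x)) ∂μ < ⊤})
    (ψ : ℝ → ℝ) (hψ : ∀ θ, ψ θ = Real.log (∫ x, Real.exp (θ * x) ∂μ))
    (A B : EReal) (S : Set ℝ)
    (hS : S = {x : ℝ | A < (x : EReal) ∧ (x : EReal) < B})
    (φ : ℝ → ℝ)
    (hφ : ∀ x ∈ S, φ x ∈ interior Θ ∧ deriv ψ (φ x) = x)
    (hφinv : ∀ θ ∈ interior Θ, deriv ψ θ ∈ S ∧ φ (deriv ψ θ) = θ)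
    (Aδ Bδ : ℝ)
    (hAδ : (Aδ : EReal) = max (A + (δ : EReal)) ((-(1/δ) : ℝ) : EReal))
    (hBδ : (Bδ : EReal) = min (B - (δ : EReal)) (((1/δ) : ℝ) : EReal))
    (tilt : ℝ → Measure ℝ)
    (htilt : ∀ θ, tilt θ =
      μ.withDensity fun x => ENNReal.ofReal (Real.exp (θ * x - ψ θ))) :
    ∃ C₁ : ℝ, 0 < C₁ ∧
      ∀ (m n : ℕ) (r : Fin m → ℝ) (c : Fin n → ℝ) (ρ : ℝ)
        (α : Fin m → ℝ) (β : Fin n → ℝ),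
        (∀ i j, α i + β j ∈ interior Θ) →
        (∀ i, ∑ j, deriv ψ (α i + β j) = r i) →
        (∀ j, ∑ i, deriv ψ (α i + β j) = c j) →
        (∀ i j, Aδ ≤ deriv ψ (α i + β j) ∧ deriv ψ (α i + β j) ≤ Bδ) →
        ∀ Tρ : Set ((Fin m × Fin n) → ℝ),
          Tρ = {x | (∑ i, |(∑ j, x (i, j)) - r i|) ≤ ρ ∧
                    (∑ j, |(∑ i, x (i, j)) - c j|) ≤ ρ} →
          0 < Measure.pi (fun _ : Fin m × Fin n => μ) Tρ →
          Measure.pi (fun _ : Fin m × Fin n => μ) Tρ < ⊤ →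
          ∀ E : Set ((Fin m × Fin n) → ℝ), MeasurableSet E →
            Measure.pi (fun _ : Fin m × Fin n => μ) (E ∩ Tρ)
                / Measure.pi (fun _ : Fin m × Fin n => μ) Tρ
              ≤ ENNReal.ofReal (Real.exp (C₁ * ρ)) *
                (Measure.pi (fun p : Fin m × Fin n => tilt (α p.1 + β p.2)) Tρ)⁻¹ *
                Measure.pi (fun p : Fin m × Fin n => tilt (α p.1 + β p.2)) E := by
  classical
  have hconvΘ : ConvexOn ℝ Θ ψ := convexOn_logMGF μ Θ hΘ ψ hψ
  have hconv : ConvexOn ℝ (interior Θ) ψ :=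
    hconvΘ.subset interior_subset hconvΘ.1.interior
  -- pick reference points
  obtain ⟨vm, hAvm, hvmAδ, hvm0⟩ := exists_real_btwn_ne (Adelta_lt hδ hAδ)
  obtain ⟨vp, hBδvp, hvpB, hvp0⟩ := exists_real_btwn_ne (lt_Bdelta hδ hBδ)
  have hvmAδ' : vm < Aδ := EReal.coe_lt_coe_iff.mp hvmAδ
  have hBδvp' : Bδ < vp := EReal.coe_lt_coe_iff.mp hBδvp
  -- differentiability at nonzero points of S
  have hdiff : ∀ v : ℝ, v ∈ S → v ≠ 0 → DifferentiableAt ℝ ψ (φ v) := by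
    intro v hv hv0
    by_contra h
    exact hv0 (((hφ v hv).2).symm.trans (deriv_zero_of_not_differentiableAt h))
  -- monotonicity of φ on S \ {0}
  have hmono : ∀ v w : ℝ, v ∈ S → w ∈ S → v ≠ 0 → w ≠ 0 → v < w → φ v ≤ φ w := by
    intro v w hv hw hv0 hw0 hvw
    rcases lt_trichotomy (φ v) (φ w) with h | h | h
    · exact h.le
    · exact h.le
    · exfalso
      have h1 := hconv.slope_le_deriv (hφ w hw).1 (hφ v hv).1 h (hdiff v hv hv0)
      have h2 := hconv.deriv_le_slope (hφ w hw).1 (hφ v hv).1 h (hdiff w hw hw0)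
      rw [(hφ v hv).2] at h1
      rw [(hφ w hw).2] at h2
      linarith
  set K : ℝ := |φ vm| + |φ vp| + |φ 0| + 1 with hK
  have hK1 : 1 ≤ K := by
    have := abs_nonneg (φ vm); have := abs_nonneg (φ vp); have := abs_nonneg (φ 0)
    rw [hK]; linarith
  refine ⟨6 * K + 1, by linarith, ?_⟩
  intro m n r c ρ α β hmem hr hc htame Tρ hTρ hTpos hTfin E hE
  -- ρ is nonnegative
  have hρ : 0 ≤ ρ := by
    obtain ⟨x, hx⟩ := nonempty_of_measure_ne_zero hTpos.ne'
    rw [hTρ] at hx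
    exact le_trans (Finset.sum_nonneg fun i _ => abs_nonneg _) hx.1
  -- bound on the tilts
  have hθK : ∀ i j, |α i + β j| ≤ K := by
    intro i j
    obtain ⟨hvS, hφv⟩ := hφinv _ (hmem i j)
    obtain ⟨hAv, hvB⟩ := htame i j
    by_cases hv0 : deriv ψ (α i + β j) = 0
    · rw [← hφv, hv0]
      have := abs_nonneg (φ vm); have := abs_nonneg (φ vp)
      rw [hK]; linarith
    · set v := deriv ψ (α i + β j) with hv
      have hvS' : A < (v : EReal) ∧ (v : EReal) < B := by rw [hS] at hvS; exact hvS
      have hvmv : vm < v := lt_of_lt_of_le hvmAδ' hAv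
      have hvvp : v < vp := lt_of_le_of_lt hvB hBδvp'
      have hvmS : vm ∈ S := by
        rw [hS]
        exact ⟨hAvm, lt_trans (EReal.coe_lt_coe_iff.mpr hvmv) hvS'.2⟩
      have hvpS : vp ∈ S := by
        rw [hS]
        exact ⟨lt_trans hvS'.1 (EReal.coe_lt_coe_iff.mpr hvvp), hvpB⟩
      have h1 := hmono vm v hvmS hvS hvm0 hv0 hvmv
      have h2 := hmono v vp hvS hvpS hv0 hvp0 hvvp
      rw [← hφv]
      rw [abs_le]
      constructor
      · have := neg_abs_le (φ vm); rw [hK]; have := abs_nonneg (φ vp); have := abs_nonneg (φ 0)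
        nlinarith [abs_nonneg (φ vm)]
      · have := le_abs_self (φ vp); rw [hK]
        have := abs_nonneg (φ vm); have := abs_nonneg (φ 0)
        linarith
  -- measurability of Tρ
  have hmR : Measurable fun x : (Fin m × Fin n) → ℝ => ∑ i, |(∑ j, x (i, j)) - r i| :=
    Finset.measurable_sum _ fun i _ =>
      ((Finset.measurable_sum _ fun j _ => measurable_pi_apply (i, j)).sub
        measurable_const).abs
  have hmC : Measurable fun x : (Fin m × Fin n) → ℝ => ∑ j, |(∑ i, x (i, j)) - c j| :=
    Finset.measurable_sum _ fun j _ =>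
      ((Finset.measurable_sum _ fun i _ => measurable_pi_apply (i, j)).sub
        measurable_const).abs
  have hTmeas : MeasurableSet Tρ := by
    rw [hTρ]
    exact (measurableSet_le hmR measurable_const).inter (measurableSet_le hmC measurable_const)
  -- density rewriting
  have hνeq : Measure.pi (fun p : Fin m × Fin n => tilt (α p.1 + β p.2))
      = (Measure.pi fun _ : Fin m × Fin n => μ).withDensity
          (fun x => ENNReal.ofReal (Real.exp
            (∑ p : Fin m × Fin n, ((α p.1 + β p.2) * x p - ψ (α p.1 + β p.2))))) := by
    have h1 : (fun p : Fin m × Fin n => tilt (α p.1 + β p.2))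
        = fun p : Fin m × Fin n => μ.withDensity
            (fun y => ENNReal.ofReal (Real.exp ((α p.1 + β p.2) * y - ψ (α p.1 + β p.2)))) := by
      funext p; exact htilt _
    haveI : ∀ p : Fin m × Fin n, SigmaFinite (μ.withDensity
        fun y => ENNReal.ofReal (Real.exp ((α p.1 + β p.2) * y - ψ (α p.1 + β p.2)))) :=
      fun p => SigmaFinite.withDensity_ofReal _
    rw [h1, pi_withDensity (fun _ => μ)
      (fun (p : Fin m × Fin n) (y : ℝ) =>
        ENNReal.ofReal (Real.exp ((α p.1 + β p.2) * y - ψ (α p.1 + β p.2))))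
      (fun p => by fun_prop)]
    congr 1
    funext x
    rw [Real.exp_sum, ENNReal.ofReal_prod_of_nonneg (fun p _ => Real.exp_nonneg _)]
  -- the function g and constant L
  set g : ((Fin m × Fin n) → ℝ) → ℝ :=
    fun x => ∑ p : Fin m × Fin n, ((α p.1 + β p.2) * x p - ψ (α p.1 + β p.2)) with hg
  have hgmeas : Measurable g := by
    rw [hg]
    exact Finset.measurable_sum _ fun p _ =>
      ((measurable_pi_apply p).const_mul _).sub measurable_const
  set L : ℝ := (∑ i, α i * r i + ∑ j, β j * c j)
      - ∑ p : Fin m × Fin n, ψ (α p.1 + β p.2) with hL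
  -- sum of margins identity
  have hrc : ∑ i, r i = ∑ j, c j := by
    calc ∑ i, r i = ∑ i, ∑ j, deriv ψ (α i + β j) :=
          Finset.sum_congr rfl fun i _ => (hr i).symm
      _ = ∑ j, ∑ i, deriv ψ (α i + β j) := Finset.sum_comm
      _ = ∑ j, c j := Finset.sum_congr rfl fun j _ => hc j
  -- key bound on g over Tρ
  have hgL : ∀ x ∈ Tρ, |g x - L| ≤ 3 * K * ρ := by
    intro x hx
    rw [hTρ] at hx
    obtain ⟨hx1, hx2⟩ := hx
    -- residuals
    set Rd : Fin m → ℝ := fun i => (∑ j, x (i, j)) - r i with hRd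
    set Cd : Fin n → ℝ := fun j => (∑ i, x (i, j)) - c j with hCd
    have hdecomp : g x - L = ∑ i, α i * Rd i + ∑ j, β j * Cd j := by
      rw [hg, hL, hRd, hCd]
      simp only
      rw [Finset.sum_sub_distrib, Fintype.sum_prod_type]
      have e1 : ∀ i : Fin m, ∑ j, (α i + β j) * x (i, j)
          = α i * (∑ j, x (i, j)) + ∑ j, β j * x (i, j) := by
        intro i
        rw [Finset.mul_sum, ← Finset.sum_add_distrib]
        exact Finset.sum_congr rfl fun j _ => by ring
      rw [Finset.sum_congr rfl fun i _ => e1 i, Finset.sum_add_distrib, Finset.sum_comm]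
      have e2 : ∀ j : Fin n, ∑ i, β j * x (i, j) = β j * ∑ i, x (i, j) := by
        intro j; rw [Finset.mul_sum]
      rw [Finset.sum_congr rfl fun j _ => e2 j]
      have e3 : ∑ i, α i * ((∑ j, x (i, j)) - r i)
          = (∑ i, α i * (∑ j, x (i, j))) - ∑ i, α i * r i := by
        rw [← Finset.sum_sub_distrib]
        exact Finset.sum_congr rfl fun i _ => by ring
      have e4 : ∑ j, β j * ((∑ i, x (i, j)) - c j)
          = (∑ j, β j * (∑ i, x (i, j))) - ∑ j, β j * c j := by
        rw [← Finset.sum_sub_distrib]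
        exact Finset.sum_congr rfl fun j _ => by ring
      rw [e3, e4]
      ring
    rcases Nat.eq_zero_or_pos m with hm | hm
    · -- m = 0 : everything vanishes
      subst hm
      have hc0 : ∀ j, c j = 0 := fun j => by rw [← hc j]; simp
      have : g x - L = 0 := by
        rw [hdecomp]
        have : ∀ j, Cd j = 0 := fun j => by rw [hCd]; simp [hc0 j]
        simp [this]
      rw [this, abs_zero]
      positivity
    rcases Nat.eq_zero_or_pos n with hn | hn
    · subst hn
      have hr0 : ∀ i, r i = 0 := fun i => by rw [← hr i]; simp
      have : g x - L = 0 := by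
        rw [hdecomp]
        have : ∀ i, Rd i = 0 := fun i => by rw [hRd]; simp [hr0 i]
        simp [this]
      rw [this, abs_zero]
      positivity
    -- main case
    set i₀ : Fin m := ⟨0, hm⟩
    set j₀ : Fin n := ⟨0, hn⟩
    set t : ℝ := β j₀ with ht
    have hsumRC : ∑ i, Rd i = ∑ j, Cd j := by
      rw [hRd, hCd]
      simp only
      rw [Finset.sum_sub_distrib, Finset.sum_sub_distrib, Finset.sum_comm, hrc]
    have hshift : g x - L = ∑ i, (α i + t) * Rd i + ∑ j, (β j - t) * Cd j := by
      have h1 : ∑ i, (α i + t) * Rd i = (∑ i, α i * Rd i) + t * ∑ i, Rd i := by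
        rw [Finset.mul_sum, ← Finset.sum_add_distrib]
        exact Finset.sum_congr rfl fun i _ => by ring
      have h2 : ∑ j, (β j - t) * Cd j = (∑ j, β j * Cd j) - t * ∑ j, Cd j := by
        rw [Finset.mul_sum, ← Finset.sum_sub_distrib]
        exact Finset.sum_congr rfl fun j _ => by ring
      rw [hdecomp, h1, h2, hsumRC]
      ring
    have hb1 : |∑ i, (α i + t) * Rd i| ≤ K * ρ := by
      calc |∑ i, (α i + t) * Rd i| ≤ ∑ i, |(α i + t) * Rd i| :=
            Finset.abs_sum_le_sum_abs _ _
        _ ≤ ∑ i, K * |Rd i| := by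
            refine Finset.sum_le_sum fun i _ => ?_
            rw [abs_mul]
            exact mul_le_mul_of_nonneg_right (hθK i j₀) (abs_nonneg _)
        _ = K * ∑ i, |Rd i| := by rw [Finset.mul_sum]
        _ ≤ K * ρ := mul_le_mul_of_nonneg_left hx1 (by linarith)
    have hb2 : |∑ j, (β j - t) * Cd j| ≤ 2 * K * ρ := by
      have hβ : ∀ j, |β j - t| ≤ 2 * K := by
        intro j
        have h1 := hθK i₀ j
        have h2 := hθK i₀ j₀
        have : β j - t = (α i₀ + β j) - (α i₀ + β j₀) := by rw [ht]; ring
        rw [this]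
        calc |(α i₀ + β j) - (α i₀ + β j₀)| ≤ |α i₀ + β j| + |α i₀ + β j₀| := abs_sub _ _
          _ ≤ 2 * K := by linarith
      calc |∑ j, (β j - t) * Cd j| ≤ ∑ j, |(β j - t) * Cd j| :=
            Finset.abs_sum_le_sum_abs _ _
        _ ≤ ∑ j, (2 * K) * |Cd j| := by
            refine Finset.sum_le_sum fun j _ => ?_
            rw [abs_mul]
            exact mul_le_mul_of_nonneg_right (hβ j) (abs_nonneg _)
        _ = (2 * K) * ∑ j, |Cd j| := by rw [Finset.mul_sum]
        _ ≤ 2 * K * ρ := mul_le_mul_of_nonneg_left hx2 (by linarith)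
    calc |g x - L| = |∑ i, (α i + t) * Rd i + ∑ j, (β j - t) * Cd j| := by rw [hshift]
      _ ≤ |∑ i, (α i + t) * Rd i| + |∑ j, (β j - t) * Cd j| := abs_add_le _ _
      _ ≤ K * ρ + 2 * K * ρ := add_le_add hb1 hb2
      _ = 3 * K * ρ := by ring
  -- final chain
  have hmain := transfer_endgame (Measure.pi fun _ : Fin m × Fin n => μ) Tρ E hTmeas hE
    g hgmeas L (3 * K * ρ) hgL
  rw [hνeq]
  refine hmain.trans ?_
  have hexp : Real.exp (2 * (3 * K * ρ)) ≤ Real.exp ((6 * K + 1) * ρ) := by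
    apply Real.exp_le_exp.mpr
    nlinarith
  exact mul_le_mul' (mul_le_mul' (ENNReal.ofReal_le_ofReal hexp) le_rfl) le_rfl
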